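/- Let f : X → X be a continuous self-map of a compact metric space with the shadowing property. Suppose a sequence of eventually periodic δ_j-pseudo orbits ξ_j = (x_i^{(j)})_{i≥0} is given with δ_j → 0, and sup_{i≥0} d(x_i^{(j)}, x_i^{(j+1)}) ≤ ε_j where ∑_j ε_j ≤ ε. Then the limits x_i = lim_{j→∞} x_i^{(j)} exist, the sequence (x_i) is a genuine orbit of f (f(x_i) = x_{i+1}), d(x_0^{(0)}, x_0) ≤ ε, and ω(x_0, f) is a minimal set all of whose points are regularly recurrent; hence x_0 ∈ 𝔸(f). -/

import Mathlib

open Filter Topology Metric Set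

/-- A periodic structure: a sequence of positive integers with `m j ∣ m (j+1)` and `m j → ∞`. -/
structure PeriodicStructure where
  m : ℕ → ℕ
  pos : ∀ j, 0 < m j
  dvd : ∀ j, m j ∣ m (j + 1)
  tendsto : Filter.Tendsto m Filter.atTop Filter.atTop

/-- The odometer space `X_m` of a periodic structure. -/
def PeriodicStructure.space (p : PeriodicStructure) : Type :=
  {x : ℕ → ℕ // ∀ j, x j < p.m j ∧ x (j + 1) % p.m j = x j}

instance (p : PeriodicStructure) : TopologicalSpace p.space :=
  inferInstanceAs (TopologicalSpace
    {x : ℕ → ℕ // ∀ j, x j < p.m j ∧ x (j + 1) % p.m j = x j})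

/-- The odometer map `g_m` (adding 1 coordinatewise mod `m j`). -/
def PeriodicStructure.step (p : PeriodicStructure) (x : p.space) : p.space :=
  ⟨fun j => (x.1 j + 1) % p.m j, by
    intro j
    refine ⟨Nat.mod_lt _ (p.pos j), ?_⟩
    show (x.1 (j + 1) + 1) % p.m (j + 1) % p.m j = (x.1 j + 1) % p.m j
    rw [Nat.mod_mod_of_dvd _ (p.dvd j), ← (x.2 j).2, Nat.add_mod]
    exact Nat.add_mod_mod _ _ _⟩

/-- `S` is an odometer for `f`: `f` restricted to `S` is topologically conjugate to
an odometer `g_m : X_m → X_m`. -/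
def IsOdometer {X : Type*} [TopologicalSpace X] (f : X → X) (S : Set X) : Prop :=
  ∃ p : PeriodicStructure, ∃ h : p.space ≃ₜ S,
    ∀ z : p.space, f ((h z : X)) = ((h (p.step z) : X))

/-- `S` is a periodic orbit of `f`. -/
def IsPeriodicOrbit {X : Type*} (f : X → X) (S : Set X) : Prop :=
  ∃ x ∈ S, ∃ i : ℕ, 0 < i ∧ f^[i] x = x ∧ S = {y | ∃ j < i, f^[j] x = y}

/-- The ω-limit set of a sequence of points. -/
def omegaLimitSeq {X : Type*} [TopologicalSpace X] (x : ℕ → X) : Set X :=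
  {y | ∃ φ : ℕ → ℕ, StrictMono φ ∧
    Filter.Tendsto (fun j => x (φ j)) Filter.atTop (nhds y)}

/-- The ω-limit set `ω(x, f)` of a point. -/
def omegaLimitPt {X : Type*} [TopologicalSpace X] (f : X → X) (x : X) : Set X :=
  omegaLimitSeq fun i => f^[i] x

/-- `M` is a minimal set for `f`. -/
def IsMinimalSet {X : Type*} [TopologicalSpace X] (f : X → X) (M : Set X) : Prop :=
  M.Nonempty ∧ IsClosed M ∧ Set.MapsTo f M M ∧
    ∀ S ⊆ M, IsClosed S → Set.MapsTo f S S → S = ∅ ∨ S = M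

/-- `x` is a minimal point for `f`. -/
def IsMinimalPoint {X : Type*} [TopologicalSpace X] (f : X → X) (x : X) : Prop :=
  IsMinimalSet f (closure (Set.range fun i => f^[i] x))

/-- `x` is a regularly recurrent point for `f`. -/
def RegularlyRecurrent {X : Type*} [PseudoMetricSpace X] (f : X → X) (x : X) : Prop :=
  ∀ ε > 0, ∃ n : ℕ, 0 < n ∧ ∀ k : ℕ, dist x (f^[k * n] x) ≤ ε

/-- `f` has the shadowing property. -/
def ShadowingProperty {X : Type*} [PseudoMetricSpace X] (f : X → X) : Prop :=
  ∀ ε > 0, ∃ δ > 0, ∀ ξ : ℕ → X,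
    (∀ i, dist (f (ξ i)) (ξ (i + 1)) ≤ δ) → ∃ y, ∀ i, dist (f^[i] y) (ξ i) ≤ ε

namespace LimitPOA

/-- Bundled context: a genuine orbit `a` which is uniformly approximated, along
arithmetic progressions, at each level `j`. -/
structure Ctx {X : Type*} [MetricSpace X] (f : X → X) (a : ℕ → X) where
  N : ℕ → ℕ
  K : ℕ → ℕ
  η : ℕ → ℝ
  hf : Continuous f
  hNpos : ∀ j, 0 < N j
  hNdvd : ∀ j, N j ∣ N (j + 1)
  hη : Filter.Tendsto η Filter.atTop (nhds 0)
  hηnn : ∀ j, 0 ≤ η j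
  hstep : ∀ i, a (i + 1) = f (a i)
  hA : ∀ j i i', K j ≤ i → K j ≤ i' → i % N j = i' % N j → dist (a i) (a i') ≤ 2 * η j

variable {X : Type*} [MetricSpace X] {f : X → X} {a : ℕ → X}

/-- finite uniform continuity for iterates -/
theorem fuc [CompactSpace X] (hf : Continuous f) :
    ∀ (n : ℕ) {γ : ℝ}, 0 < γ → ∃ δ > 0, ∀ p ≤ n, ∀ x y : X, dist x y < δ →
      dist (f^[p] x) (f^[p] y) < γ := by
  intro n
  induction n with
  | zero =>
    intro γ hγ
    refine ⟨γ, hγ, fun p hp x y h => ?_⟩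
    have : p = 0 := Nat.le_zero.1 hp
    subst this
    simpa using h
  | succ n ih =>
    intro γ hγ
    obtain ⟨δ₁, hδ₁, h1⟩ := ih hγ
    obtain ⟨δ₂, hδ₂, h2⟩ := Metric.uniformContinuous_iff.1
      (CompactSpace.uniformContinuous_of_continuous (hf.iterate (n + 1))) γ hγ
    refine ⟨min δ₁ δ₂, lt_min hδ₁ hδ₂, fun p hp x y h => ?_⟩
    rcases Nat.lt_or_ge p (n + 1) with h' | h'
    · exact h1 p (Nat.lt_succ_iff.1 h') x y (h.trans_le (min_le_left _ _))
    · have hp' : p = n + 1 := le_antisymm hp h'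
      subst hp'
      exact h2 (h.trans_le (min_le_right _ _))

namespace Ctx

theorem dvd_le (C : Ctx f a) : ∀ {j l : ℕ}, j ≤ l → C.N j ∣ C.N l := by
  intro j l h
  induction l, h using Nat.le_induction with
  | base => exact dvd_rfl
  | succ l hl ih => exact ih.trans (C.hNdvd l)

theorem iter (C : Ctx f a) (i : ℕ) : ∀ m, a (i + m) = f^[m] (a i) := by
  intro m
  induction m with
  | zero => simp
  | succ m ih =>
    show a ((i + m) + 1) = f^[m + 1] (a i)
    rw [C.hstep (i + m), ih, ← Function.iterate_succ_apply' f m (a i)]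

theorem mem_iff (C : Ctx f a) {z : X} :
    z ∈ omegaLimitSeq a ↔ ∀ ε > 0, ∀ M : ℕ, ∃ i, M ≤ i ∧ dist (a i) z < ε := by
  constructor
  · rintro ⟨φ, hφ, hlim⟩ ε hε M
    obtain ⟨J, hJ⟩ := (Metric.tendsto_atTop).1 hlim ε hε
    exact ⟨φ (max J M), le_trans (le_max_right _ _) hφ.le_apply, hJ _ (le_max_left _ _)⟩
  · intro h
    have hfreq : ∀ u : ℕ, ∃ᶠ i in atTop, dist (a i) z < 1 / (u + 1) := by
      intro u
      refine Filter.frequently_atTop.2 fun M => ?_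
      obtain ⟨i, hi, hd⟩ := h (1 / (u + 1)) (by positivity) M
      exact ⟨i, hi, hd⟩
    obtain ⟨φ, hφ, hP⟩ := Filter.extraction_forall_of_frequently hfreq
    refine ⟨φ, hφ, tendsto_iff_dist_tendsto_zero.2 ?_⟩
    exact squeeze_zero (fun _ => dist_nonneg) (fun u => (hP u).le)
      tendsto_one_div_add_atTop_nhds_zero_nat

theorem closedΩ (C : Ctx f a) : IsClosed (omegaLimitSeq a) := by
  refine isClosed_of_closure_subset fun z hz => ?_
  rw [C.mem_iff]
  intro ε hε M
  obtain ⟨y, hy, hdy⟩ := Metric.mem_closure_iff.1 hz (ε / 2) (by linarith)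
  obtain ⟨i, hi, hdi⟩ := (C.mem_iff.1 hy) (ε / 2) (by linarith) M
  refine ⟨i, hi, ?_⟩
  have h1 := dist_triangle (a i) y z
  rw [dist_comm z y] at hdy
  linarith

theorem nonemptyΩ [CompactSpace X] (C : Ctx f a) : (omegaLimitSeq a).Nonempty := by
  obtain ⟨z, -, φ, hφ, hlim⟩ := isCompact_univ.tendsto_subseq (x := a) fun n => mem_univ (a n)
  exact ⟨z, φ, hφ, hlim⟩

theorem mapsToΩ [CompactSpace X] (C : Ctx f a) :
    MapsTo f (omegaLimitSeq a) (omegaLimitSeq a) := by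
  intro z hz
  rw [C.mem_iff]
  intro ε hε M
  obtain ⟨δ, hδ, hu⟩ := Metric.uniformContinuous_iff.1
    (CompactSpace.uniformContinuous_of_continuous C.hf) ε hε
  obtain ⟨i, hi, hdi⟩ := C.mem_iff.1 hz δ hδ M
  refine ⟨i + 1, le_trans hi (Nat.le_succ i), ?_⟩
  rw [C.hstep i]
  exact hu hdi

/-- uniform regular recurrence on the ω-limit set -/
theorem rr [CompactSpace X] (C : Ctx f a) {z : X} (hz : z ∈ omegaLimitSeq a) (j m : ℕ) :
    dist z (f^[m * C.N j] z) ≤ 2 * C.η j := by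
  refine le_of_forall_pos_le_add fun ε' hε' => ?_
  obtain ⟨δ, hδ, hu⟩ := Metric.uniformContinuous_iff.1
    (CompactSpace.uniformContinuous_of_continuous (C.hf.iterate (m * C.N j))) (ε' / 2)
    (by linarith)
  obtain ⟨i, hi, hdi⟩ := C.mem_iff.1 hz (min δ (ε' / 2)) (lt_min hδ (by linarith)) (C.K j)
  have h1 : dist z (a i) < ε' / 2 := by
    rw [dist_comm]; exact hdi.trans_le (min_le_right _ _)
  have h2 : dist (a i) (a (i + m * C.N j)) ≤ 2 * C.η j :=
    C.hA j i (i + m * C.N j) hi (le_trans hi (Nat.le_add_right _ _))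
      (Nat.add_mul_mod_self_right i m (C.N j)).symm
  have h3 : dist (a (i + m * C.N j)) (f^[m * C.N j] z) < ε' / 2 := by
    rw [C.iter i (m * C.N j)]
    exact hu (hdi.trans_le (min_le_left _ _))
  have h4 := dist_triangle4 z (a i) (a (i + m * C.N j)) (f^[m * C.N j] z)
  linarith

theorem equi [CompactSpace X] (C : Ctx f a) {γ : ℝ} (hγ : 0 < γ) :
    ∃ δ > 0, ∀ u ∈ omegaLimitSeq a, ∀ v ∈ omegaLimitSeq a, dist u v < δ →
      ∀ t, dist (f^[t] u) (f^[t] v) ≤ γ := by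
  obtain ⟨j, hj⟩ : ∃ j, C.η j < γ / 6 := (C.hη.eventually (gt_mem_nhds (by positivity))).exists
  obtain ⟨δ, hδ, hd⟩ := fuc C.hf (C.N j) (show (0:ℝ) < γ / 3 by positivity)
  refine ⟨δ, hδ, fun u hu v hv huv t => ?_⟩
  have ht : t = t / C.N j * C.N j + t % C.N j := by
    rw [mul_comm]; exact (Nat.div_add_mod t (C.N j)).symm
  have e1 : f^[t] u = f^[t / C.N j * C.N j] (f^[t % C.N j] u) := by
    conv_lhs => rw [ht, Function.iterate_add_apply]
  have e2 : f^[t] v = f^[t / C.N j * C.N j] (f^[t % C.N j] v) := by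
    conv_lhs => rw [ht, Function.iterate_add_apply]
  have hsu : f^[t % C.N j] u ∈ omegaLimitSeq a := (C.mapsToΩ.iterate _) hu
  have hsv : f^[t % C.N j] v ∈ omegaLimitSeq a := (C.mapsToΩ.iterate _) hv
  have b1 : dist (f^[t] u) (f^[t % C.N j] u) ≤ 2 * C.η j := by
    rw [e1, dist_comm]; exact C.rr hsu j _
  have b2 : dist (f^[t % C.N j] u) (f^[t % C.N j] v) < γ / 3 :=
    hd _ (le_of_lt (Nat.mod_lt _ (C.hNpos j))) u v huv
  have b3 : dist (f^[t % C.N j] v) (f^[t] v) ≤ 2 * C.η j := by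
    rw [e2]; exact C.rr hsv j _
  have h4 := dist_triangle4 (f^[t] u) (f^[t % C.N j] u) (f^[t % C.N j] v) (f^[t] v)
  linarith

theorem recur [CompactSpace X] (C : Ctx f a) {z : X} (hz : z ∈ omegaLimitSeq a) (j M : ℕ)
    {δ : ℝ} (hδ : 0 < δ) : ∃ m, M ≤ m ∧ dist z (f^[m * C.N j] z) < δ := by
  obtain ⟨l₀, hl₀⟩ := Filter.eventually_atTop.1
    (C.hη.eventually (gt_mem_nhds (show (0:ℝ) < δ / 2 by linarith)))
  have hηl : C.η (max j l₀) < δ / 2 := hl₀ _ (le_max_right _ _)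
  have hdvd : C.N j ∣ C.N (max j l₀) := C.dvd_le (le_max_left _ _)
  have hq : 0 < C.N (max j l₀) / C.N j :=
    Nat.div_pos (Nat.le_of_dvd (C.hNpos _) hdvd) (C.hNpos j)
  refine ⟨(M + 1) * (C.N (max j l₀) / C.N j), ?_, ?_⟩
  · exact le_trans (Nat.le_succ M) (Nat.le_mul_of_pos_right _ hq)
  · have he : (M + 1) * (C.N (max j l₀) / C.N j) * C.N j = (M + 1) * C.N (max j l₀) := by
      rw [mul_assoc, Nat.div_mul_cancel hdvd]
    rw [he]
    have := C.rr hz (max j l₀) (M + 1)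
    linarith

theorem minimal [CompactSpace X] (C : Ctx f a) : IsMinimalSet f (omegaLimitSeq a) := by
  refine ⟨C.nonemptyΩ, C.closedΩ, C.mapsToΩ, ?_⟩
  intro S hSsub hScl hSmap
  rcases S.eq_empty_or_nonempty with h | ⟨z, hzS⟩
  · exact Or.inl h
  refine Or.inr (Subset.antisymm hSsub fun w hw => ?_)
  have hzΩ := hSsub hzS
  rw [← hScl.closure_eq, Metric.mem_closure_iff]
  intro ε hε
  obtain ⟨j, hj⟩ : ∃ j, C.η j < ε / 6 := (C.hη.eventually (gt_mem_nhds (by linarith))).exists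
  obtain ⟨δ, hδ, hd⟩ := fuc C.hf (C.N j) (show (0:ℝ) < ε / 3 by linarith)
  obtain ⟨i', hi', hdi'⟩ := C.mem_iff.1 hzΩ δ hδ (C.K j)
  obtain ⟨i, hi, hdi⟩ := C.mem_iff.1 hw (ε / 3) (by linarith) (max (C.K j) i')
  have hKi : C.K j ≤ i := le_trans (le_max_left _ _) hi
  have hi'i : i' ≤ i := le_trans (le_max_right _ _) hi
  refine ⟨f^[(i - i') % C.N j] z, (hSmap.iterate _) hzS, ?_⟩
  have hmod : i % C.N j = (i' + (i - i') % C.N j) % C.N j := by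
    have h1 : i' + (i - i') % C.N j ≡ i' + (i - i') [MOD C.N j] :=
      (Nat.ModEq.refl i').add (Nat.mod_modEq (i - i') (C.N j))
    have h2 : i' + (i - i') = i := Nat.add_sub_cancel' hi'i
    rw [h2] at h1
    exact h1.symm
  have hb : dist (a i) (a (i' + (i - i') % C.N j)) ≤ 2 * C.η j :=
    C.hA j i (i' + (i - i') % C.N j) hKi (le_trans hi' (Nat.le_add_right _ _)) hmod
  have hc : dist (a (i' + (i - i') % C.N j)) (f^[(i - i') % C.N j] z) < ε / 3 := by
    rw [C.iter i' ((i - i') % C.N j)]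
    exact hd _ (le_of_lt (Nat.mod_lt _ (C.hNpos j))) (a i') z hdi'
  have h4 := dist_triangle4 w (a i) (a (i' + (i - i') % C.N j)) (f^[(i - i') % C.N j] z)
  rw [dist_comm (a i) w] at hdi
  linarith

end Ctx

/-- the "coset" set: closure of the forward orbit of `x` under `f^[n]`. -/
def Wset (f : X → X) (n : ℕ) (x : X) : Set X :=
  closure {y | ∃ m : ℕ, f^[m * n] x = y}

theorem self_mem_Wset (f : X → X) (n : ℕ) (x : X) : x ∈ Wset f n x :=
  subset_closure ⟨0, by simp⟩

theorem Wset_anti {n₁ n₂ : ℕ} (h : n₁ ∣ n₂) (x : X) : Wset f n₂ x ⊆ Wset f n₁ x := by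
  apply closure_mono
  rintro y ⟨m, rfl⟩
  obtain ⟨c, rfl⟩ := h
  exact ⟨m * c, by rw [show m * c * n₁ = m * (n₁ * c) by ring]⟩

theorem Wset_iterate_mem (hf : Continuous f) {n : ℕ} {x u : X} (hu : u ∈ Wset f n x) (m : ℕ) :
    f^[m * n] u ∈ Wset f n x := by
  have h1 := image_closure_subset_closure_image
    (s := {y | ∃ m' : ℕ, f^[m' * n] x = y}) (hf.iterate (m * n))
  have h2 : f^[m * n] '' {y | ∃ m' : ℕ, f^[m' * n] x = y} ⊆ {y | ∃ m' : ℕ, f^[m' * n] x = y} := by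
    rintro _ ⟨_, ⟨m', rfl⟩, rfl⟩
    exact ⟨m + m', by rw [add_mul, Function.iterate_add_apply]⟩
  exact closure_mono h2 (h1 ⟨u, hu, rfl⟩)

theorem Wset_mono (hf : Continuous f) {n : ℕ} {z z' : X} (h : z' ∈ Wset f n z) :
    Wset f n z' ⊆ Wset f n z :=
  closure_minimal (by rintro y ⟨m, rfl⟩; exact Wset_iterate_mem hf h m) isClosed_closure

theorem Wset_map (hf : Continuous f) {n : ℕ} {x u : X} (hu : u ∈ Wset f n x) :
    f u ∈ Wset f n (f x) := by
  have h1 := image_closure_subset_closure_image (s := {y | ∃ m : ℕ, f^[m * n] x = y}) hf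
  have h2 : f '' {y | ∃ m : ℕ, f^[m * n] x = y} ⊆ {y | ∃ m : ℕ, f^[m * n] (f x) = y} := by
    rintro _ ⟨_, ⟨m, rfl⟩, rfl⟩
    refine ⟨m, ?_⟩
    rw [← Function.iterate_succ_apply, Function.iterate_succ_apply']
  exact closure_mono h2 (h1 ⟨u, hu, rfl⟩)

namespace Ctx

theorem Wset_subset [CompactSpace X] (C : Ctx f a) {z : X} (hz : z ∈ omegaLimitSeq a) (j : ℕ) :
    Wset f (C.N j) z ⊆ omegaLimitSeq a :=
  closure_minimal (by rintro y ⟨m, rfl⟩; exact (C.mapsToΩ.iterate _) hz) C.closedΩ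

theorem Wset_dist [CompactSpace X] (C : Ctx f a) {z : X} (hz : z ∈ omegaLimitSeq a) (j : ℕ)
    {y : X} (hy : y ∈ Wset f (C.N j) z) : dist y z ≤ 2 * C.η j := by
  have h1 : Wset f (C.N j) z ⊆ closedBall z (2 * C.η j) := by
    refine closure_minimal ?_ isClosed_closedBall
    rintro y' ⟨m, rfl⟩
    rw [mem_closedBall, dist_comm]
    exact C.rr hz j m
  exact mem_closedBall.1 (h1 hy)

theorem Wset_symm [CompactSpace X] (C : Ctx f a) {z z' : X} (hz : z ∈ omegaLimitSeq a) (j : ℕ)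
    (hz' : z' ∈ Wset f (C.N j) z) : z ∈ Wset f (C.N j) z' := by
  have hz'Ω : z' ∈ omegaLimitSeq a := C.Wset_subset hz j hz'
  rw [Wset, Metric.mem_closure_iff]
  intro δ hδ
  obtain ⟨δ', hδ'pos, hE⟩ := C.equi (show (0:ℝ) < δ / 2 by linarith)
  obtain ⟨b, ⟨m, rfl⟩, hbd⟩ := Metric.mem_closure_iff.1 hz' δ' hδ'pos
  obtain ⟨nn, hnm, hrec⟩ := C.recur hz j m (show (0:ℝ) < δ / 2 by linarith)
  refine ⟨f^[(nn - m) * C.N j] z', ⟨nn - m, rfl⟩, ?_⟩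
  have h4 : f^[(nn - m) * C.N j] (f^[m * C.N j] z) = f^[nn * C.N j] z := by
    rw [← Function.iterate_add_apply, ← add_mul, Nat.sub_add_cancel hnm]
  have h3 : dist (f^[(nn - m) * C.N j] z') (f^[nn * C.N j] z) ≤ δ / 2 := by
    rw [← h4]
    exact hE z' hz'Ω (f^[m * C.N j] z) ((C.mapsToΩ.iterate _) hz) hbd ((nn - m) * C.N j)
  have h5 := dist_triangle z (f^[nn * C.N j] z) (f^[(nn - m) * C.N j] z')
  rw [dist_comm (f^[nn * C.N j] z) (f^[(nn - m) * C.N j] z')] at h5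
  linarith

theorem Wset_eq [CompactSpace X] (C : Ctx f a) {z z' : X} (hz : z ∈ omegaLimitSeq a) (j : ℕ)
    (hz' : z' ∈ Wset f (C.N j) z) : Wset f (C.N j) z' = Wset f (C.N j) z :=
  Subset.antisymm (Wset_mono C.hf hz') (Wset_mono C.hf (C.Wset_symm hz j hz'))

theorem Wset_eq_of_inter [CompactSpace X] (C : Ctx f a) {z w u : X} (hz : z ∈ omegaLimitSeq a)
    (hw : w ∈ omegaLimitSeq a) (j : ℕ) (hu1 : u ∈ Wset f (C.N j) z)
    (hu2 : u ∈ Wset f (C.N j) w) : Wset f (C.N j) z = Wset f (C.N j) w := by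
  rw [← C.Wset_eq hz j hu1, C.Wset_eq hw j hu2]

theorem Wset_shift [CompactSpace X] (C : Ctx f a) {z w : X} (hz : z ∈ omegaLimitSeq a)
    (hw : w ∈ omegaLimitSeq a) (j : ℕ) (h : Wset f (C.N j) z = Wset f (C.N j) w) :
    Wset f (C.N j) (f z) = Wset f (C.N j) (f w) := by
  have h1 : z ∈ Wset f (C.N j) w := h ▸ self_mem_Wset f (C.N j) z
  have h2 : f z ∈ Wset f (C.N j) (f w) := Wset_map C.hf h1
  exact C.Wset_eq (C.mapsToΩ hw) j h2

theorem Wset_shift_iter [CompactSpace X] (C : Ctx f a) {z w : X} (hz : z ∈ omegaLimitSeq a)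
    (hw : w ∈ omegaLimitSeq a) (j s : ℕ) (h : Wset f (C.N j) z = Wset f (C.N j) w) :
    Wset f (C.N j) (f^[s] z) = Wset f (C.N j) (f^[s] w) := by
  induction s with
  | zero => simpa using h
  | succ s ih =>
    rw [Function.iterate_succ_apply', Function.iterate_succ_apply']
    exact C.Wset_shift ((C.mapsToΩ.iterate s) hz) ((C.mapsToΩ.iterate s) hw) j ih

end Ctx

theorem dichotomy [CompactSpace X] (C : Ctx f a) :
    IsPeriodicOrbit f (omegaLimitSeq a) ∨ IsOdometer f (omegaLimitSeq a) := by
  classical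
  obtain ⟨z₀, hz₀⟩ := C.nonemptyΩ
  by_cases hper : ∃ z ∈ omegaLimitSeq a, ∃ q : ℕ, 0 < q ∧ f^[q] z = z
  · -- periodic orbit case
    obtain ⟨z, hzΩ, q, hq, hfix⟩ := hper
    left
    have hS₀ : {y | ∃ l < q, f^[l] z = y} = (fun l => f^[l] z) '' (Set.Iio q) := by
      ext y
      simp [Set.mem_image, Set.mem_Iio]
    have hfin : ({y | ∃ l < q, f^[l] z = y}).Finite := by
      rw [hS₀]; exact (Set.finite_Iio q).image _
    have hsub : {y | ∃ l < q, f^[l] z = y} ⊆ omegaLimitSeq a := by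
      rintro y ⟨l, _, rfl⟩; exact (C.mapsToΩ.iterate l) hzΩ
    have hmap : MapsTo f {y | ∃ l < q, f^[l] z = y} {y | ∃ l < q, f^[l] z = y} := by
      rintro y ⟨l, hl, rfl⟩
      rcases Nat.lt_or_ge (l + 1) q with h' | h'
      · exact ⟨l + 1, h', Function.iterate_succ_apply' f l z⟩
      · have hlq : l + 1 = q := le_antisymm (Nat.succ_le_of_lt hl) h'
        have hz1 : f (f^[l] z) = z := by
          have hq1 : f^[q] z = z := hfix
          rw [← hlq, Function.iterate_succ_apply'] at hq1
          exact hq1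
        exact ⟨0, hq, by simpa using hz1.symm⟩
    rcases C.minimal.2.2.2 _ hsub hfin.isClosed hmap with h0 | hΩeq
    · exfalso
      have hzmem : z ∈ {y | ∃ l < q, f^[l] z = y} := ⟨0, hq, by simp⟩
      rw [h0] at hzmem
      exact hzmem
    · exact ⟨z, hzΩ, q, hq, hfix, hΩeq.symm⟩
  · -- odometer case
    right
    have horb : ∀ s : ℕ, f^[s] z₀ ∈ omegaLimitSeq a := fun s => (C.mapsToΩ.iterate s) hz₀
    have hWex : ∀ j : ℕ, ∃ t, 0 < t ∧ Wset f (C.N j) (f^[t] z₀) = Wset f (C.N j) z₀ := by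
      intro j
      refine ⟨C.N j, C.hNpos j, C.Wset_eq hz₀ j ?_⟩
      exact subset_closure ⟨1, by rw [one_mul]⟩
    set p : ℕ → ℕ := fun j => Nat.find (hWex j) with hpdef
    have hppos : ∀ j, 0 < p j := fun j => (Nat.find_spec (hWex j)).1
    have hpW : ∀ j, Wset f (C.N j) (f^[p j] z₀) = Wset f (C.N j) z₀ :=
      fun j => (Nat.find_spec (hWex j)).2
    have hPe1 : ∀ j s, Wset f (C.N j) (f^[s + p j] z₀) = Wset f (C.N j) (f^[s] z₀) := by
      intro j s
      have h1 := C.Wset_shift_iter (horb (p j)) hz₀ j s (hpW j)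
      rwa [← Function.iterate_add_apply] at h1
    have hPeq : ∀ j q r : ℕ, Wset f (C.N j) (f^[r + q * p j] z₀) = Wset f (C.N j) (f^[r] z₀) := by
      intro j q
      induction q with
      | zero => intro r; simp
      | succ q ih =>
        intro r
        have h1 : r + (q + 1) * p j = (r + q * p j) + p j := by ring
        rw [h1, hPe1 j (r + q * p j), ih r]
    have hPe : ∀ j t, Wset f (C.N j) (f^[t] z₀) = Wset f (C.N j) (f^[t % p j] z₀) := by
      intro j t
      have h1 := hPeq j (t / p j) (t % p j)
      rwa [show t % p j + t / p j * p j = t from by rw [mul_comm]; exact Nat.mod_add_div t (p j)]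
        at h1
    have hDiv : ∀ j t, Wset f (C.N j) (f^[t] z₀) = Wset f (C.N j) z₀ → p j ∣ t := by
      intro j t h
      rcases Nat.eq_zero_or_pos (t % p j) with h0 | hpos
      · exact Nat.dvd_of_mod_eq_zero h0
      · exfalso
        have h1 : Wset f (C.N j) (f^[t % p j] z₀) = Wset f (C.N j) z₀ := by
          rw [← hPe j t]; exact h
        exact Nat.find_min (hWex j) (Nat.mod_lt t (hppos j)) ⟨hpos, h1⟩
    have hDistinct : ∀ j t t', t < p j → t' < p j →
        Wset f (C.N j) (f^[t] z₀) = Wset f (C.N j) (f^[t'] z₀) → t = t' := by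
      have key : ∀ j t t', t ≤ t' → t < p j → t' < p j →
          Wset f (C.N j) (f^[t] z₀) = Wset f (C.N j) (f^[t'] z₀) → t = t' := by
        intro j t t' hle ht ht' h
        have h1 := C.Wset_shift_iter (horb t) (horb t') j (p j - t') h
        rw [← Function.iterate_add_apply, ← Function.iterate_add_apply] at h1
        have h2 : p j - t' + t' = p j := Nat.sub_add_cancel (le_of_lt ht')
        rw [h2, hpW j] at h1
        have h3 := hDiv j (p j - t' + t) h1
        have h6 : p j ≤ p j - t' + t := Nat.le_of_dvd (by omega) h3
        omega
      intro j t t' ht ht' h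
      rcases le_total t t' with hle | hle
      · exact key j t t' hle ht ht' h
      · exact (key j t' t hle ht' ht h.symm).symm
    have hpdvd : ∀ j, p j ∣ p (j + 1) := by
      intro j
      apply hDiv j
      have h1 : f^[p (j + 1)] z₀ ∈ Wset f (C.N (j + 1)) z₀ := by
        rw [← hpW (j + 1)]; exact self_mem_Wset f _ _
      exact C.Wset_eq hz₀ j (Wset_anti (C.hNdvd j) z₀ h1)
    have hpmono : Monotone p :=
      monotone_nat_of_le_succ fun j => Nat.le_of_dvd (hppos (j + 1)) (hpdvd j)
    have hnostab : ∀ j, ∃ j', j ≤ j' ∧ p j < p j' := by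
      intro j
      by_contra hcon
      push_neg at hcon
      apply hper
      refine ⟨z₀, hz₀, p j, hppos j, ?_⟩
      have hdist : ∀ j', j ≤ j' → dist (f^[p j] z₀) z₀ ≤ 2 * C.η j' := by
        intro j' hj'
        have hpe : p j' = p j := le_antisymm (hcon j' hj') (hpmono hj')
        have h1 : f^[p j] z₀ ∈ Wset f (C.N j') z₀ := by
          rw [← hpe, ← hpW j']; exact self_mem_Wset f _ _
        exact C.Wset_dist hz₀ j' h1
      have htend : Tendsto (fun j' => 2 * C.η j') atTop (𝓝 0) := by
        simpa using C.hη.const_mul 2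
      have h0 : dist (f^[p j] z₀) z₀ ≤ 0 :=
        ge_of_tendsto htend (Filter.eventually_atTop.2 ⟨j, hdist⟩)
      exact dist_eq_zero.1 (le_antisymm h0 dist_nonneg)
    have hunb : ∀ B : ℕ, ∃ j, B ≤ p j := by
      intro B
      induction B with
      | zero => exact ⟨0, Nat.zero_le _⟩
      | succ B ih =>
        obtain ⟨j, hj⟩ := ih
        obtain ⟨j', hjj', hlt⟩ := hnostab j
        exact ⟨j', by omega⟩
    have hptop : Tendsto p atTop atTop := by
      rw [tendsto_atTop_atTop]
      intro B
      obtain ⟨j, hj⟩ := hunb B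
      exact ⟨j, fun j' hj' => le_trans hj (hpmono hj')⟩
    have hCov : ∀ j, ∀ z ∈ omegaLimitSeq a, ∃ t, t < p j ∧ z ∈ Wset f (C.N j) (f^[t] z₀) := by
      intro j z hz
      have hdense : closure (Set.range fun i => f^[i] z₀) = omegaLimitSeq a := by
        have hsub : closure (Set.range fun i => f^[i] z₀) ⊆ omegaLimitSeq a :=
          closure_minimal (by rintro y ⟨i, rfl⟩; exact horb i) C.closedΩ
        have hmap : MapsTo f (closure (Set.range fun i => f^[i] z₀))
            (closure (Set.range fun i => f^[i] z₀)) := by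
          intro u hu
          have h1 := image_closure_subset_closure_image
            (s := Set.range fun i => f^[i] z₀) C.hf
          have h2 : f '' (Set.range fun i => f^[i] z₀) ⊆ Set.range fun i => f^[i] z₀ := by
            rintro _ ⟨_, ⟨i, rfl⟩, rfl⟩
            exact ⟨i + 1, Function.iterate_succ_apply' f i z₀⟩
          exact closure_mono h2 (h1 ⟨u, hu, rfl⟩)
        rcases C.minimal.2.2.2 _ hsub isClosed_closure hmap with h0 | h1
        · exfalso
          have hm : z₀ ∈ closure (Set.range fun i => f^[i] z₀) := subset_closure ⟨0, by simp⟩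
          rw [h0] at hm
          exact hm
        · exact h1
      have hzcl : z ∈ closure (Set.range fun i => f^[i] z₀) := by rw [hdense]; exact hz
      have hTorbex : ∀ u : ℕ, ∃ T : ℕ, dist z (f^[T] z₀) < 1 / (u + 1) := by
        intro u
        obtain ⟨b, ⟨T, rfl⟩, hb⟩ := Metric.mem_closure_iff.1 hzcl (1 / (u + 1)) (by positivity)
        exact ⟨T, hb⟩
      choose T hT using hTorbex
      obtain ⟨r₀, hr₀⟩ := Finite.exists_infinite_fiber
        (fun u => (⟨T u % C.N j, Nat.mod_lt _ (C.hNpos j)⟩ : Fin (C.N j)))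
      have hinf : {u | T u % C.N j = (r₀ : ℕ)}.Infinite := by
        have h1 := Set.infinite_coe_iff.1 hr₀
        refine h1.mono ?_
        intro u hu
        have h2 : (⟨T u % C.N j, Nat.mod_lt _ (C.hNpos j)⟩ : Fin (C.N j)) = r₀ := hu
        exact congrArg Fin.val h2
      have hzW : z ∈ Wset f (C.N j) (f^[(r₀ : ℕ)] z₀) := by
        rw [Wset, Metric.mem_closure_iff]
        intro δ hδ
        obtain ⟨u₀, hu₀⟩ := exists_nat_one_div_lt hδ
        obtain ⟨u, huf, huu⟩ := hinf.exists_gt u₀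
        refine ⟨f^[T u] z₀, ⟨T u / C.N j, ?_⟩, ?_⟩
        · rw [← Function.iterate_add_apply]
          congr 1
          have h := Nat.div_add_mod (T u) (C.N j)
          rw [huf] at h
          rw [mul_comm]
          exact h
        · have h1 : dist z (f^[T u] z₀) < 1 / (u + 1) := hT u
          have h2 : (1 : ℝ) / (u + 1) ≤ 1 / (u₀ + 1) := by
            apply one_div_le_one_div_of_le (by positivity)
            have : (u₀ : ℝ) ≤ u := by exact_mod_cast huu.le
            linarith
          linarith
      refine ⟨(r₀ : ℕ) % p j, Nat.mod_lt _ (hppos j), ?_⟩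
      rw [← hPe j (r₀ : ℕ)]
      exact hzW
    have hUn : ∀ j (z : X), ∀ t t', t < p j → t' < p j →
        z ∈ Wset f (C.N j) (f^[t] z₀) → z ∈ Wset f (C.N j) (f^[t'] z₀) → t = t' := by
      intro j z t t' ht ht' h1 h2
      exact hDistinct j t t' ht ht' (C.Wset_eq_of_inter (horb t) (horb t') j h1 h2)
    set P : PeriodicStructure := ⟨p, hppos, hpdvd, hptop⟩ with hPdef
    have hTex : ∀ (j : ℕ) (z : ↥(omegaLimitSeq a)),
        ∃ t, t < p j ∧ (z : X) ∈ Wset f (C.N j) (f^[t] z₀) := fun j z => hCov j z.1 z.2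
    set tI : ℕ → ↥(omegaLimitSeq a) → ℕ := fun j z => (hTex j z).choose with htIdef
    have htI1 : ∀ j z, tI j z < p j := fun j z => (hTex j z).choose_spec.1
    have htI2 : ∀ (j : ℕ) (z : ↥(omegaLimitSeq a)), (z : X) ∈ Wset f (C.N j) (f^[tI j z] z₀) :=
      fun j z => (hTex j z).choose_spec.2
    have htIuniq : ∀ (j : ℕ) (z : ↥(omegaLimitSeq a)) (t : ℕ), t < p j → (z : X) ∈ Wset f (C.N j) (f^[t] z₀) → tI j z = t :=
      fun j z t ht hmem => hUn j z.1 (tI j z) t (htI1 j z) ht (htI2 j z) hmem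
    have hcoh : ∀ j z, tI (j + 1) z % p j = tI j z := by
      intro j z
      have h1 : (z : X) ∈ Wset f (C.N j) (f^[tI (j + 1) z] z₀) :=
        Wset_anti (C.hNdvd j) _ (htI2 (j + 1) z)
      rw [hPe j (tI (j + 1) z)] at h1
      exact (htIuniq j z _ (Nat.mod_lt _ (hppos j)) h1).symm
    have hπ : ∀ z : ↥(omegaLimitSeq a), ∀ j, (fun j => tI j z) j < P.m j ∧
        (fun j => tI j z) (j + 1) % P.m j = (fun j => tI j z) j :=
      fun z j => ⟨htI1 j z, hcoh j z⟩
    set π : ↥(omegaLimitSeq a) → P.space := fun z => ⟨fun j => tI j z, hπ z⟩ with hπdef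
    have hπinj : Function.Injective π := by
      intro z w h
      have hj : ∀ j, tI j z = tI j w := fun j => congrFun (congrArg Subtype.val h) j
      apply Subtype.ext
      have hd : ∀ j, dist (z : X) (w : X) ≤ 4 * C.η j := by
        intro j
        have h1 := C.Wset_dist (horb (tI j z)) j (htI2 j z)
        have h2 := C.Wset_dist (horb (tI j w)) j (htI2 j w)
        rw [← hj j] at h2
        have h3 := dist_triangle (z : X) (f^[tI j z] z₀) (w : X)
        rw [dist_comm (f^[tI j z] z₀) (w : X)] at h3
        linarith
      have htend : Tendsto (fun j => 4 * C.η j) atTop (𝓝 0) := by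
        simpa using C.hη.const_mul 4
      have h0 : dist (z : X) (w : X) ≤ 0 :=
        ge_of_tendsto htend (Filter.Eventually.of_forall hd)
      exact dist_eq_zero.1 (le_antisymm h0 dist_nonneg)
    have hπsurj : Function.Surjective π := by
      intro x
      have hFsub : ∀ j, Wset f (C.N (j + 1)) (f^[x.1 (j + 1)] z₀) ⊆
          Wset f (C.N j) (f^[x.1 j] z₀) := by
        intro j
        have h1 : Wset f (C.N j) (f^[x.1 (j + 1)] z₀) = Wset f (C.N j) (f^[x.1 j] z₀) := by
          rw [hPe j (x.1 (j + 1)), (x.2 j).2]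
        exact fun y hy => h1 ▸ Wset_anti (C.hNdvd j) _ hy
      obtain ⟨u, hu⟩ := IsCompact.nonempty_iInter_of_sequence_nonempty_isCompact_isClosed
        (fun j => Wset f (C.N j) (f^[x.1 j] z₀)) hFsub
        (fun j => ⟨f^[x.1 j] z₀, self_mem_Wset f _ _⟩) isClosed_closure.isCompact
        (fun j => isClosed_closure)
      have huΩ : u ∈ omegaLimitSeq a :=
        C.Wset_subset (horb (x.1 0)) 0 (Set.mem_iInter.1 hu 0)
      refine ⟨⟨u, huΩ⟩, ?_⟩
      apply Subtype.ext
      funext j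
      exact htIuniq j ⟨u, huΩ⟩ (x.1 j) (x.2 j).1 (Set.mem_iInter.1 hu j)
    have hπcont : Continuous π := by
      apply Continuous.subtype_mk
      apply continuous_pi
      intro j
      rw [continuous_discrete_rng]
      intro t
      by_cases ht : t < p j
      · have hfib : ((fun z : ↥(omegaLimitSeq a) => tI j z) ⁻¹' {t}) =
            Subtype.val ⁻¹' (Wset f (C.N j) (f^[t] z₀)) := by
          ext z
          simp only [Set.mem_preimage, Set.mem_singleton_iff]
          constructor
          · rintro rfl; exact htI2 j z
          · intro h; exact htIuniq j z t ht h
        rw [hfib, ← isClosed_compl_iff]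
        have hcompl : (Subtype.val ⁻¹' (Wset f (C.N j) (f^[t] z₀)) :
            Set ↥(omegaLimitSeq a))ᶜ = ⋃ (t' : Fin (p j)), ⋃ (_ : (t' : ℕ) ≠ t),
            Subtype.val ⁻¹' (Wset f (C.N j) (f^[(t' : ℕ)] z₀)) := by
          ext z
          simp only [Set.mem_compl_iff, Set.mem_preimage, Set.mem_iUnion]
          constructor
          · intro hz
            refine ⟨⟨tI j z, htI1 j z⟩, ?_, htI2 j z⟩
            intro he
            exact hz (by rw [← he]; exact htI2 j z)
          · rintro ⟨t', hne, hmem⟩ hmem'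
            exact hne (hUn j z t' t t'.2 ht hmem hmem')
        rw [hcompl]
        refine isClosed_iUnion_of_finite fun t' => ?_
        refine isClosed_iUnion_of_finite fun _ => ?_
        exact isClosed_closure.preimage continuous_subtype_val
      · have hfib : ((fun z : ↥(omegaLimitSeq a) => tI j z) ⁻¹' {t}) = ∅ := by
          ext z
          simp only [Set.mem_preimage, Set.mem_singleton_iff, Set.mem_empty_iff_false,
            iff_false]
          intro h
          exact ht (h ▸ htI1 j z)
        rw [hfib]
        exact isOpen_empty
    haveI : CompactSpace ↥(omegaLimitSeq a) := isCompact_iff_compactSpace.1 C.closedΩ.isCompact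
    haveI : T2Space P.space :=
      inferInstanceAs (T2Space {x : ℕ → ℕ // ∀ j, x j < P.m j ∧ x (j + 1) % P.m j = x j})
    have hπbij : Function.Bijective π := ⟨hπinj, hπsurj⟩
    have hecont : Continuous (Equiv.ofBijective π hπbij) := hπcont
    set H : ↥(omegaLimitSeq a) ≃ₜ P.space := hecont.homeoOfEquivCompactToT2 with hHdef
    refine ⟨P, H.symm, ?_⟩
    intro zp
    have hcomm : ∀ u : ↥(omegaLimitSeq a), π ⟨f u.1, C.mapsToΩ u.2⟩ = P.step (π u) := by
      intro u
      apply Subtype.ext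
      funext j
      show tI j ⟨f u.1, C.mapsToΩ u.2⟩ = (tI j u + 1) % p j
      apply htIuniq
      · exact Nat.mod_lt _ (hppos j)
      · have h1 : (u : X) ∈ Wset f (C.N j) (f^[tI j u] z₀) := htI2 j u
        have h2 : f u.1 ∈ Wset f (C.N j) (f (f^[tI j u] z₀)) := Wset_map C.hf h1
        rw [← Function.iterate_succ_apply' f (tI j u) z₀] at h2
        rwa [hPe j (tI j u + 1)] at h2
    have hπH : ∀ w : P.space, π (H.symm w) = w := fun w => H.apply_symm_apply w
    have h1 : π ⟨f (H.symm zp).1, C.mapsToΩ (H.symm zp).2⟩ = P.step zp := by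
      rw [hcomm (H.symm zp), hπH zp]
    have h2 : π (H.symm (P.step zp)) = P.step zp := hπH _
    have h3 : (⟨f (H.symm zp).1, C.mapsToΩ (H.symm zp).2⟩ : ↥(omegaLimitSeq a)) =
        H.symm (P.step zp) := hπinj (h1.trans h2.symm)
    exact congrArg Subtype.val h3

end LimitPOA

theorem limit_of_pseudo_orbits_in_A {X : Type*} [MetricSpace X] [CompactSpace X]
    (f : X → X) (hf : Continuous f) (hsh : ShadowingProperty f)
    (ε : ℝ) (hε : 0 < ε) (εs δs : ℕ → ℝ)
    (hεs : ∀ j, 0 < εs j) (hδs : ∀ j, 0 < δs j)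
    (hsum : Summable εs) (hsum' : ∑' j, εs j ≤ ε)
    (hδ0 : Filter.Tendsto δs Filter.atTop (nhds 0))
    (ξ : ℕ → ℕ → X)
    (hpo : ∀ j i, dist (f (ξ j i)) (ξ j (i + 1)) ≤ δs j)
    (hep : ∀ j, ∃ k : ℕ, ∃ n : ℕ, 0 < n ∧ ∀ i, k ≤ i → ξ j i = ξ j (i + n))
    (hcl : ∀ j i, dist (ξ j i) (ξ (j + 1) i) ≤ εs j) :
    ∃ a : ℕ → X,
      (∀ i, Filter.Tendsto (fun j => ξ j i) Filter.atTop (nhds (a i))) ∧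
      (∀ i, f (a i) = a (i + 1)) ∧
      dist (ξ 0 0) (a 0) ≤ ε ∧
      IsMinimalSet f (omegaLimitPt f (a 0)) ∧
      (∀ z ∈ omegaLimitPt f (a 0), RegularlyRecurrent f z) ∧
      (IsPeriodicOrbit f (omegaLimitPt f (a 0)) ∨
        IsOdometer f (omegaLimitPt f (a 0))) := by
  classical
  have hcauchy : ∀ i, ∃ x : X, Tendsto (fun j => ξ j i) atTop (𝓝 x) := fun i =>
    cauchySeq_tendsto_of_complete (cauchySeq_of_dist_le_of_summable εs (fun j => hcl j i) hsum)
  choose a hlim using hcauchy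
  set η : ℕ → ℝ := fun j => ∑' m, εs (j + m) with hηdef
  have hdist : ∀ j i, dist (ξ j i) (a i) ≤ η j := fun j i =>
    dist_le_tsum_of_dist_le_of_tendsto εs (fun n => hcl n i) hsum (hlim i) j
  have hηnn : ∀ j, 0 ≤ η j := fun j => tsum_nonneg fun m => (hεs _).le
  have hηtend : Tendsto η atTop (𝓝 0) := by
    have h1 := tendsto_sum_nat_add εs
    have h2 : η = fun j => ∑' m, εs (m + j) := by
      funext j; exact tsum_congr fun m => by rw [add_comm]
    rw [h2]
    exact h1
  have hstep : ∀ i, a (i + 1) = f (a i) := by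
    intro i
    have h1 : Tendsto (fun j => f (ξ j i)) atTop (𝓝 (f (a i))) :=
      (hf.tendsto (a i)).comp (hlim i)
    have h2 : Tendsto (fun j => dist (f (ξ j i)) (ξ j (i + 1))) atTop (𝓝 0) :=
      squeeze_zero (fun j => dist_nonneg) (fun j => hpo j i) hδ0
    exact (tendsto_nhds_unique (tendsto_of_tendsto_of_dist h1 h2) (hlim (i + 1))).symm
  choose k n hnpos hper using hep
  set N : ℕ → ℕ := fun j => Nat.rec (n 0) (fun j' Nj => Nj * n (j' + 1)) j with hNdef
  have hNsucc : ∀ j, N (j + 1) = N j * n (j + 1) := fun j => rfl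
  have hNpos : ∀ j, 0 < N j := by
    intro j
    induction j with
    | zero => exact hnpos 0
    | succ j ih => rw [hNsucc]; exact Nat.mul_pos ih (hnpos (j + 1))
  have hNdvd : ∀ j, N j ∣ N (j + 1) := fun j => by rw [hNsucc]; exact dvd_mul_right _ _
  have hndvd : ∀ j, n j ∣ N j := by
    intro j
    cases j with
    | zero => exact dvd_rfl
    | succ j => rw [hNsucc]; exact dvd_mul_left _ _
  have hperm : ∀ j m i, k j ≤ i → ξ j i = ξ j (i + m * n j) := by
    intro j m
    induction m with
    | zero => intro i _; simp
    | succ m ih =>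
      intro i hi
      have h1 := ih i hi
      have h2 := hper j (i + m * n j) (le_trans hi (Nat.le_add_right _ _))
      rw [h1, h2]
      congr 1
      ring
  have hperN : ∀ j m i, k j ≤ i → ξ j i = ξ j (i + m * N j) := by
    intro j m i hi
    have h1 : m * N j = (m * (N j / n j)) * n j := by
      rw [mul_assoc, Nat.div_mul_cancel (hndvd j)]
    rw [h1]
    exact hperm j (m * (N j / n j)) i hi
  have hA : ∀ j i i', k j ≤ i → k j ≤ i' → i % N j = i' % N j →
      dist (a i) (a i') ≤ 2 * η j := by
    have key : ∀ j i i', i ≤ i' → k j ≤ i → i % N j = i' % N j →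
        dist (a i) (a i') ≤ 2 * η j := by
      intro j i i' hle hki hmod
      obtain ⟨m, hm⟩ := (Nat.modEq_iff_dvd' hle).1 hmod
      have hi' : i' = i + m * N j := by
        have h1 := Nat.add_sub_cancel' hle
        rw [hm, mul_comm] at h1
        omega
      have hξeq : ξ j i = ξ j i' := by rw [hi']; exact hperN j m i hki
      have hb1 : dist (a i) (ξ j i) ≤ η j := by rw [dist_comm]; exact hdist j i
      have hb2 : dist (ξ j i) (a i') ≤ η j := by rw [hξeq]; exact hdist j i'
      have h4 := dist_triangle (a i) (ξ j i) (a i')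
      linarith
    intro j i i' h1 h2 h3
    rcases le_total i i' with h | h
    · exact key j i i' h h1 h3
    · rw [dist_comm]; exact key j i' i h h2 h3.symm
  set C : LimitPOA.Ctx f a := ⟨N, k, η, hf, hNpos, hNdvd, hηtend, hηnn, hstep, hA⟩ with hCdef
  have haeq : ∀ i, a i = f^[i] (a 0) := fun i => by simpa using C.iter 0 i
  have hΩeq : omegaLimitPt f (a 0) = omegaLimitSeq a := by
    have hfun : (fun i => f^[i] (a 0)) = a := funext fun i => (haeq i).symm
    unfold omegaLimitPt
    rw [hfun]
  refine ⟨a, hlim, fun i => (hstep i).symm, ?_, ?_, ?_, ?_⟩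
  · have h1 : dist (ξ 0 0) (a 0) ≤ η 0 := hdist 0 0
    have h2 : η 0 = ∑' m, εs m := by
      rw [hηdef]
      exact tsum_congr fun m => by rw [Nat.zero_add]
    rw [h2] at h1
    exact h1.trans hsum'
  · rw [hΩeq]; exact C.minimal
  · rw [hΩeq]
    intro z hz ε' hε'
    obtain ⟨j, hj⟩ : ∃ j, 2 * C.η j ≤ ε' := by
      obtain ⟨j, hj⟩ :=
        (hηtend.eventually (gt_mem_nhds (show (0:ℝ) < ε' / 2 by linarith))).exists
      exact ⟨j, by
        have : C.η j = η j := rfl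
        rw [this]; linarith⟩
    exact ⟨C.N j, C.hNpos j, fun kk => le_trans (C.rr hz j kk) hj⟩
  · rw [hΩeq]; exact LimitPOA.dichotomy C
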